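/- If the distance from N(0,r) to the set of natural numbers equals 2ε > 0, then N(0,r) − N(0, r/e) ≥ ε. -/

import Mathlib

noncomputable section

/-- Almgren frequency of a harmonic function `u = Σ a_k P_k` (spherical-harmonic expansion
with normalized `P_k`), expressed through its coefficients:
`N(0,t) = (Σ k a_k² t^{2k}) / (Σ a_k² t^{2k})`. -/
noncomputable def freqS (a : ℕ → ℝ) (t : ℝ) : ℝ :=
  (∑' k : ℕ, (k : ℝ) * a k ^ 2 * t ^ (2 * k)) / (∑' k : ℕ, a k ^ 2 * t ^ (2 * k))

noncomputable def qe : ℝ := Real.exp (-2)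

lemma qe_pos : 0 < qe := Real.exp_pos _

lemma qe_mul : qe * Real.exp 2 = 1 := by
  rw [qe, ← Real.exp_add]; norm_num

lemma qe_le : qe ≤ 1/3 := by
  have h3 : (3:ℝ) ≤ Real.exp 2 := by linarith [Real.add_one_le_exp (2:ℝ)]
  nlinarith [qe_pos, qe_mul]

lemma qe_pow (i : ℕ) : (1 + 2*(i:ℝ)) * qe^i ≤ 1 := by
  have hmul : qe^i * Real.exp (2*(i:ℝ)) = 1 := by
    rw [qe, ← Real.exp_nat_mul, ← Real.exp_add,
      show (i:ℝ) * -2 + 2*(i:ℝ) = 0 by ring, Real.exp_zero]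
  have h1 : (1 + 2*(i:ℝ)) ≤ Real.exp (2*(i:ℝ)) := by
    have := Real.add_one_le_exp (2*(i:ℝ)); linarith
  have h2 := mul_le_mul_of_nonneg_right h1 (pow_nonneg qe_pos.le i)
  nlinarith [h2, hmul]

lemma keyA (u : ℝ) (hu0 : 0 ≤ u) (hu1 : u ≤ 1) (j : ℕ) :
    u + j * (qe*(u-1) - u) ≤ qe^j * (u - j) := by
  have hq0 := qe_pos
  have hq3 := qe_le
  match j with
  | 0 => simp
  | 1 => push_cast; ring_nf; norm_num
  | (j+2) =>
    have hJ : (2:ℝ) ≤ ((j+2:ℕ):ℝ) := by push_cast; linarith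
    have hpow : qe^(j+2) ≤ qe^2 := pow_le_pow_of_le_one hq0.le (by linarith) (by omega)
    have h1 : qe^2*(u - ((j+2:ℕ):ℝ)) ≤ qe^(j+2)*(u - ((j+2:ℕ):ℝ)) :=
      mul_le_mul_of_nonpos_right hpow (by linarith)
    have h2 : u + ((j+2:ℕ):ℝ) * (qe*(u-1) - u) ≤ qe^2*(u - ((j+2:ℕ):ℝ)) := by
      nlinarith [mul_nonneg (by linarith : (0:ℝ) ≤ ((j+2:ℕ):ℝ) - 2)
          (mul_nonneg (by linarith : (0:ℝ) ≤ 1 - qe) (by linarith : (0:ℝ) ≤ qe + u)),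
        mul_nonneg (by linarith : (0:ℝ) ≤ 1 - qe)
          (by nlinarith : (0:ℝ) ≤ u*(1-qe) + 2*qe)]
    linarith

lemma keyB (u : ℝ) (hu0 : 0 ≤ u) (hu1 : u ≤ 1) (i : ℕ) :
    qe^i * (u - i * (qe*(u-1) - u)) ≤ u + i := by
  have hq0 := qe_pos
  have hq3 := qe_le
  have hI : (0:ℝ) ≤ (i:ℝ) := Nat.cast_nonneg i
  have hσ : qe*(u-1) - u ≤ 0 := by nlinarith
  have hx : 0 ≤ u - i * (qe*(u-1) - u) := by nlinarith [mul_nonpos_of_nonneg_of_nonpos hI hσ]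
  have h2 : ((1 + 2*(i:ℝ)) * qe^i) * (u - i * (qe*(u-1) - u)) ≤ 1 * (u - i * (qe*(u-1) - u)) :=
    mul_le_mul_of_nonneg_right (qe_pow i) hx
  have h3 : (u - i * (qe*(u-1) - u)) ≤ (1 + 2*(i:ℝ)) * (u + i) := by
    nlinarith [mul_nonneg hI hI, mul_nonneg hI hu0, mul_nonneg (mul_nonneg hI hu0) hq0.le,
      mul_nonneg hI hq0.le]
  nlinarith [h2, h3, pow_pos hq0 i, mul_pos (by linarith : (0:ℝ) < 1 + 2*(i:ℝ)) (pow_pos hq0 i)]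

set_option maxHeartbeats 1000000 in
theorem stmt15 (a : ℕ → ℝ) (ha0 : a 0 = 0) (hnc : ∃ k : ℕ, a k ≠ 0)
    (hsum : ∀ t : ℝ, 0 < t → t ≤ 1 → Summable (fun k : ℕ => (k : ℝ) * a k ^ 2 * t ^ (2 * k)))
    (r ε : ℝ) (hr : 0 < r) (hr1 : r < 1) (hε : 0 < ε)
    (hdist : ∀ k : ℕ, 2 * ε ≤ |freqS a r - k|)
    (hdist' : ∃ k : ℕ, |freqS a r - k| = 2 * ε) :
    ε ≤ freqS a r - freqS a (r / Real.exp 1) := by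
  classical
  have hqe0 := qe_pos
  have hq3 := qe_le
  set b : ℕ → ℝ := fun k => a k ^ 2 * r ^ (2 * k) with hbdef
  have hb0 : ∀ k, 0 ≤ b k := fun k => by rw [hbdef]; positivity
  have hc : Summable (fun k : ℕ => (k : ℝ) * a k ^ 2 * r ^ (2 * k)) := hsum r hr hr1.le
  have hc' : Summable (fun k : ℕ => (k : ℝ) * b k) := by
    simpa [hbdef, mul_assoc] using hc
  have hb : Summable b := by
    apply Summable.of_nonneg_of_le hb0 _ hc'
    intro k
    match k with
    | 0 => simp [hbdef, ha0]
    | (k+1) => exact le_mul_of_one_le_left (hb0 _) (by push_cast; linarith)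
  set B := ∑' k : ℕ, b k with hBdef
  set A := ∑' k : ℕ, (k:ℝ) * b k with hAdef
  obtain ⟨k₁, hk₁⟩ := hnc
  have hbk₁ : 0 < b k₁ := by
    have h1 : 0 < a k₁ ^ 2 := lt_of_le_of_ne (sq_nonneg _) (Ne.symm (pow_ne_zero _ hk₁))
    have h2 : 0 < r ^ (2*k₁) := pow_pos hr _
    rw [hbdef]; exact mul_pos h1 h2
  have hBpos : 0 < B := lt_of_lt_of_le hbk₁ (hb.le_tsum k₁ fun j _ => hb0 j)
  set m := A / B with hmdef
  have hAm : A = m * B := by rw [hmdef, div_mul_cancel₀ A hBpos.ne']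
  have hm0 : 0 ≤ m := div_nonneg
    (tsum_nonneg fun k => mul_nonneg (Nat.cast_nonneg k) (hb0 k)) hBpos.le
  have hfr : freqS a r = m := by
    rw [freqS, hmdef, hAdef, hBdef]
    congr 1
    exact tsum_congr fun k => by rw [hbdef]; ring
  set n := ⌊m⌋₊ with hndef
  have hnm : (n:ℝ) ≤ m := Nat.floor_le hm0
  have hmn1 : m < n + 1 := Nat.lt_floor_add_one m
  have hd1 : 2*ε ≤ m - n := by
    have h := hdist n; rw [hfr] at h
    rwa [abs_of_nonneg (by linarith)] at h
  have hd2 : 2*ε ≤ 1 - (m - n) := by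
    have h := hdist (n+1); rw [hfr] at h
    rw [abs_of_nonpos (by push_cast; linarith)] at h
    push_cast at h; linarith
  have hε4 : ε ≤ 1/4 := by linarith
  have hδeq : m - n = 2*ε ∨ m - n = 1 - 2*ε := by
    obtain ⟨k₀, hk₀⟩ := hdist'
    rw [hfr] at hk₀
    rcases le_or_gt k₀ n with h | h
    · left
      have hcast : (k₀:ℝ) ≤ n := by exact_mod_cast h
      rw [abs_of_nonneg (by linarith)] at hk₀
      linarith
    · right
      have hcast : (n:ℝ) + 1 ≤ k₀ := by exact_mod_cast h
      rw [abs_of_nonpos (by linarith)] at hk₀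
      linarith
  set u := m - ε - n with hudef
  have hu0 : 0 ≤ u := by rw [hudef]; linarith
  have hu1 : u ≤ 1 := by rw [hudef]; linarith
  set σ := qe*(u-1) - u with hσdef
  have hψ : 0 ≤ u + (m - n)*σ := by
    rcases hδeq with h | h
    · have hu' : u = ε := by rw [hudef]; linarith
      rw [hσdef, hu', h]
      have hA : (0:ℝ) ≤ 1 - 2*qe - 2*ε + 2*qe*ε := by
        nlinarith [mul_nonneg (by linarith : (0:ℝ) ≤ 1/4 - ε) (by linarith : (0:ℝ) ≤ 1 - qe)]
      nlinarith [mul_nonneg hε.le hA]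
    · have hu' : u = 1 - 3*ε := by rw [hudef]; linarith
      rw [hσdef, hu', h]
      nlinarith [mul_nonneg hε.le (mul_nonneg (by linarith : (0:ℝ) ≤ 1/4 - ε)
        (by linarith : (0:ℝ) ≤ 1 - qe)), mul_nonneg hε.le hqe0.le,
        mul_nonneg hε.le (by linarith : (0:ℝ) ≤ 1 - 3*qe)]
  -- pointwise linear lower bound
  have hLkey : ∀ k : ℕ, qe^n*u + ((k:ℝ) - n) * (qe^n*σ) ≤ qe^k * (u + n - k) := by
    intro k
    rcases le_or_gt n k with h | h
    · obtain ⟨j, rfl⟩ := Nat.exists_eq_add_of_le h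
      have hk := keyA u hu0 hu1 j
      rw [← hσdef] at hk
      have h2 := mul_le_mul_of_nonneg_left hk (pow_nonneg hqe0.le n)
      rw [pow_add]
      push_cast
      nlinarith [h2]
    · obtain ⟨i, hn'⟩ := Nat.exists_eq_add_of_le h.le
      have hk := keyB u hu0 hu1 i
      rw [← hσdef] at hk
      have h2 := mul_le_mul_of_nonneg_left hk (pow_nonneg hqe0.le k)
      rw [hn', pow_add]
      push_cast
      nlinarith [h2]
  have hq1 : qe ≤ 1 := by linarith
  have hqk1 : ∀ k:ℕ, qe^k ≤ 1 := fun k => pow_le_one₀ hqe0.le hq1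
  have hD'sum : Summable (fun k : ℕ => b k * qe^k) :=
    Summable.of_nonneg_of_le (fun k => mul_nonneg (hb0 k) (pow_nonneg hqe0.le k))
      (fun k => mul_le_of_le_one_right (hb0 k) (hqk1 k)) hb
  have hA'sum : Summable (fun k : ℕ => (k:ℝ) * b k * qe^k) :=
    Summable.of_nonneg_of_le
      (fun k => mul_nonneg (mul_nonneg (Nat.cast_nonneg k) (hb0 k)) (pow_nonneg hqe0.le k))
      (fun k => mul_le_of_le_one_right (mul_nonneg (Nat.cast_nonneg k) (hb0 k)) (hqk1 k)) hc'
  set D' := ∑' k : ℕ, b k * qe^k with hD'def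
  set A' := ∑' k : ℕ, (k:ℝ) * b k * qe^k with hA'def
  have hD'pos : 0 < D' := lt_of_lt_of_le (mul_pos hbk₁ (pow_pos hqe0 k₁))
    (hD'sum.le_tsum k₁ fun j _ => mul_nonneg (hb0 j) (pow_nonneg hqe0.le j))
  have hre : ∀ k:ℕ, (r / Real.exp 1) ^ (2*k) = r^(2*k) * qe^k := by
    intro k
    have he2 : Real.exp 1 ^ 2 = Real.exp 2 := by
      rw [← Real.exp_nat_mul]; norm_num
    have hsq : (r / Real.exp 1)^2 = r^2 * qe := by
      rw [div_pow, he2, qe, Real.exp_neg, div_eq_mul_inv]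
    rw [pow_mul, hsq, mul_pow, ← pow_mul]
  have hfr2 : freqS a (r / Real.exp 1) = A' / D' := by
    rw [freqS, hA'def, hD'def]
    congr 1
    · exact tsum_congr fun k => by rw [hre k, hbdef]; ring
    · exact tsum_congr fun k => by rw [hre k, hbdef]; ring
  have hsumL1 : Summable (fun k : ℕ => (qe^n*u - n*(qe^n*σ)) * b k) := hb.mul_left _
  have hsumL2 : Summable (fun k : ℕ => (qe^n*σ) * ((k:ℝ)*b k)) := hc'.mul_left _
  have hsumR1 : Summable (fun k : ℕ => (m - ε) * (b k * qe^k)) := hD'sum.mul_left _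
  have key : ∑' k : ℕ, ((qe^n*u - n*(qe^n*σ)) * b k + (qe^n*σ) * ((k:ℝ)*b k))
      ≤ ∑' k : ℕ, ((m - ε) * (b k * qe^k) - (k:ℝ) * b k * qe^k) := by
    apply Summable.tsum_le_tsum _ (hsumL1.add hsumL2) (hsumR1.sub hA'sum)
    intro k
    have hL := mul_le_mul_of_nonneg_left (hLkey k) (hb0 k)
    have e1 : (qe^n*u - n*(qe^n*σ)) * b k + (qe^n*σ) * ((k:ℝ)*b k)
        = b k * (qe^n*u + ((k:ℝ) - n) * (qe^n*σ)) := by ring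
    have e2 : (m - ε) * (b k * qe^k) - (k:ℝ) * b k * qe^k
        = b k * (qe^k * (u + n - k)) := by rw [hudef]; ring
    rw [e1, e2]; exact hL
  have hTL : ∑' k : ℕ, ((qe^n*u - n*(qe^n*σ)) * b k + (qe^n*σ) * ((k:ℝ)*b k))
      = (qe^n*u - n*(qe^n*σ)) * B + (qe^n*σ) * A := by
    rw [Summable.tsum_add hsumL1 hsumL2, tsum_mul_left, tsum_mul_left, ← hBdef, ← hAdef]
  have hTR : ∑' k : ℕ, ((m - ε) * (b k * qe^k) - (k:ℝ) * b k * qe^k)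
      = (m - ε) * D' - A' := by
    rw [Summable.tsum_sub hsumR1 hA'sum, tsum_mul_left, ← hD'def, ← hA'def]
  have h0 : 0 ≤ (qe^n*u - n*(qe^n*σ)) * B + (qe^n*σ) * A := by
    rw [hAm]
    have e3 : (qe^n*u - ↑n*(qe^n*σ))*B + (qe^n*σ)*(m*B) = (qe^n * B) * (u + (m - n)*σ) := by
      ring
    rw [e3]
    exact mul_nonneg (mul_nonneg (pow_nonneg hqe0.le n) hBpos.le) hψ
  have hfinal : A' ≤ (m - ε) * D' := by
    rw [hTL, hTR] at key; linarith
  have hdiv : A' / D' ≤ m - ε := (div_le_iff₀ hD'pos).mpr (by linarith)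
  rw [hfr, hfr2]
  linarith
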